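/- Let Υ be a δ-hyperbolic geodesic metric space, A a λ-quasi-convex subset, and α a geodesic ray starting at a point w ∈ A whose endpoint at infinity is not in the limit set of A. Then for any points y, z on α which are each at distance greater than 6δ + λ from A, one has |d(y,z) − |d(y,A) − d(z,A)|| ≤ 10δ. -/
import Mathlib


open Metric Set

variable {X : Type*} [MetricSpace X]

/-- `f` parametrizes a geodesic segment from `x` to `y` (by arc length on `[0, dist x y]`). -/
def IsGeodesicSegment (f : ℝ → X) (x y : X) : Prop :=
  f 0 = x ∧ f (dist x y) = y ∧
    ∀ s ∈ Icc (0 : ℝ) (dist x y), ∀ t ∈ Icc (0 : ℝ) (dist x y), dist (f s) (f t) = |s - t|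

/-- `r` is a unit-speed geodesic ray (parametrized on `[0, ∞)`). -/
def IsGeodesicRay (r : ℝ → X) : Prop :=
  ∀ ⦃s t : ℝ⦄, 0 ≤ s → 0 ≤ t → dist (r s) (r t) = |s - t|

/-- `X` is `δ`-hyperbolic in the sense that geodesic triangles are `δ`-thin. -/
def SlimTriangles (X : Type*) [MetricSpace X] (δ : ℝ) : Prop :=
  ∀ (x y z : X) (f g h : ℝ → X), IsGeodesicSegment f x y → IsGeodesicSegment g y z →
    IsGeodesicSegment h x z → ∀ t ∈ Icc (0 : ℝ) (dist x z),
      ∃ s, (s ∈ Icc (0 : ℝ) (dist x y) ∧ dist (h t) (f s) ≤ δ) ∨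
           (s ∈ Icc (0 : ℝ) (dist y z) ∧ dist (h t) (g s) ≤ δ)

def GeodesicSpace (X : Type*) [MetricSpace X] : Prop :=
  ∀ x y : X, ∃ f : ℝ → X, IsGeodesicSegment f x y

def QuasiConvexSet (A : Set X) (lam : ℝ) : Prop :=
  ∀ x ∈ A, ∀ y ∈ A, ∀ f : ℝ → X, IsGeodesicSegment f x y →
    ∀ t ∈ Icc (0 : ℝ) (dist x y), infDist (f t) A ≤ lam

lemma slim_delta_nonneg (δ : ℝ) (hslim : SlimTriangles X δ) (a0 : X) : 0 ≤ δ := by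
  have hd : dist a0 a0 = 0 := dist_self a0
  have hseg : IsGeodesicSegment (fun _ : ℝ => a0) a0 a0 := by
    refine ⟨rfl, rfl, ?_⟩
    intro u hu v hv
    rw [hd] at hu hv
    have hu0 : u = 0 := le_antisymm hu.2 hu.1
    have hv0 : v = 0 := le_antisymm hv.2 hv.1
    simp [hu0, hv0]
  obtain ⟨u, hu⟩ := hslim a0 a0 a0 _ _ _ hseg hseg hseg 0
    (by rw [hd]; exact ⟨le_refl 0, le_refl 0⟩)
  rcases hu with ⟨_, h⟩ | ⟨_, h⟩ <;> simpa using h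

lemma constant_progress_aux
    (δ lam : ℝ) (hδ0 : 0 ≤ δ) (hgeo : GeodesicSpace X) (hslim : SlimTriangles X δ)
    (A : Set X) (hA : A.Nonempty) (hqc : QuasiConvexSet A lam)
    (α : ℝ → X) (hα : IsGeodesicRay α) (hw : α 0 ∈ A)
    (s t : ℝ) (hs : 0 ≤ s) (hst : s ≤ t)
    (hys : 6 * δ + lam < infDist (α s) A) :
    dist (α s) (α t) ≤ |infDist (α s) A - infDist (α t) A| + 2 * δ := by
  have ht : 0 ≤ t := hs.trans hst
  refine le_of_forall_pos_le_add ?_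
  intro ε hε
  -- choose a near-closest point `a ∈ A` to `α t`
  have hlt : infDist (α t) A < infDist (α t) A + ε := by linarith
  obtain ⟨a, haA, ha⟩ := (Metric.infDist_lt_iff hA).mp hlt
  -- geodesics
  obtain ⟨f, hf⟩ := hgeo (α 0) a
  obtain ⟨g, hg⟩ := hgeo a (α t)
  have hdist0t : dist (α 0) (α t) = t := by
    rw [hα le_rfl ht]; rw [abs_sub_comm, sub_zero]; exact abs_of_nonneg ht
  have hαseg : IsGeodesicSegment α (α 0) (α t) := by
    refine ⟨rfl, by rw [hdist0t], ?_⟩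
    intro u hu v hv
    exact hα hu.1 hv.1
  have hsmem : s ∈ Icc (0 : ℝ) (dist (α 0) (α t)) := by
    rw [hdist0t]; exact ⟨hs, hst⟩
  obtain ⟨u, hcase⟩ := hslim (α 0) a (α t) f g α hf hg hαseg s hsmem
  rcases hcase with ⟨hu, hclose⟩ | ⟨hu, hclose⟩
  · -- close to geodesic between two points of A : contradiction with depth of α s
    have h1 : infDist (f u) A ≤ lam := hqc _ hw _ haA f hf u hu
    have h2 : infDist (α s) A ≤ infDist (f u) A + dist (α s) (f u) :=
      Metric.infDist_le_infDist_add_dist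
    linarith
  · -- close to geodesic from a to α t
    set D := dist a (α t) with hD
    have hD0 : 0 ≤ D := dist_nonneg
    have h0mem : (0 : ℝ) ∈ Icc (0 : ℝ) D := ⟨le_rfl, hD0⟩
    have hDmem : D ∈ Icc (0 : ℝ) D := ⟨hD0, le_rfl⟩
    have hga : dist (g u) a = u := by
      have := hg.2.2 u hu 0 h0mem
      rw [hg.1] at this
      rw [this, sub_zero, abs_of_nonneg hu.1]
    have hgz : dist (g u) (α t) = D - u := by
      have := hg.2.2 u hu D hDmem
      rw [hg.2.1] at this
      rw [this, abs_of_nonpos (by linarith [hu.2]), neg_sub]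
    have h1 : infDist (α s) A ≤ δ + u := by
      have h2 : infDist (α s) A ≤ dist (α s) a := Metric.infDist_le_dist_of_mem haA
      have h3 : dist (α s) a ≤ dist (α s) (g u) + dist (g u) a := dist_triangle _ _ _
      linarith
    have h2 : dist (α s) (α t) ≤ δ + (D - u) := by
      have h3 : dist (α s) (α t) ≤ dist (α s) (g u) + dist (g u) (α t) := dist_triangle _ _ _
      linarith
    have h4 : infDist (α t) A - infDist (α s) A ≤ |infDist (α s) A - infDist (α t) A| := by
      rw [abs_sub_comm]; exact le_abs_self _
    have h5 : D < infDist (α t) A + ε := by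
      rw [hD, dist_comm]; exact ha
    linarith

/-- **Lemma (constant progress).** Let `Υ` be a `δ`-hyperbolic geodesic space, `A` a
`λ`-quasi-convex subset, and `α` a geodesic ray starting at a point `w ∈ A` whose endpoint at
infinity is not in the limit set of `A` (i.e. `α` does not stay at bounded distance from `A`).
Then for points `y = α s`, `z = α t` at distance greater than `6δ + λ` from `A`,
`|d(y,z) − |d(y,A) − d(z,A)|| ≤ 10δ`. -/
theorem constant_progress
    (δ lam : ℝ) (hgeo : GeodesicSpace X) (hslim : SlimTriangles X δ)
    (A : Set X) (hA : A.Nonempty) (hqc : QuasiConvexSet A lam)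
    (α : ℝ → X) (hα : IsGeodesicRay α) (hw : α 0 ∈ A)
    (hnotlim : ¬ ∃ C : ℝ, ∀ t : ℝ, 0 ≤ t → infDist (α t) A ≤ C)
    (s t : ℝ) (hs : 0 ≤ s) (ht : 0 ≤ t)
    (hys : 6 * δ + lam < infDist (α s) A) (hzt : 6 * δ + lam < infDist (α t) A) :
    abs (dist (α s) (α t) - abs (infDist (α s) A - infDist (α t) A)) ≤ 10 * δ := by
  obtain ⟨a0, _⟩ := hA
  have hδ0 : 0 ≤ δ := slim_delta_nonneg δ hslim a0
  have hlip : |infDist (α s) A - infDist (α t) A| ≤ dist (α s) (α t) := by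
    rw [abs_sub_le_iff]
    constructor
    · linarith [Metric.infDist_le_infDist_add_dist (x := α s) (y := α t) (s := A)]
    · linarith [Metric.infDist_le_infDist_add_dist (x := α t) (y := α s) (s := A),
        dist_comm (α s) (α t)]
  have hmain : dist (α s) (α t) ≤ |infDist (α s) A - infDist (α t) A| + 2 * δ := by
    rcases le_total s t with hst | hst
    · exact constant_progress_aux δ lam hδ0 hgeo hslim A ⟨a0, ‹a0 ∈ A›⟩ hqc α hα hw
        s t hs hst hys
    · have := constant_progress_aux δ lam hδ0 hgeo hslim A ⟨a0, ‹a0 ∈ A›⟩ hqc α hα hw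
        t s ht hst hzt
      rw [dist_comm (α t) (α s), abs_sub_comm] at this
      exact this
  rw [abs_le]
  constructor <;> linarith
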